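/- Let a ∈ ℂ, let A = [[−a, A₁₂],[A₁₂ᵀ, A₂₂]] and B = [[−a, B₁₂],[B₁₂ᵀ, B₂₂]] be Hermitian block matrices with A₂₂ and B₂₂ invertible, and form the star-product matrix C = [[−a, A₁₂, B₁₂],[A₁₂ᵀ, A₂₂, 0],[B₁₂ᵀ, 0, B₂₂]]. Set g_A = −a − A₁₂ A₂₂^{-1} A₁₂ᵀ, g_B = −a − B₁₂ B₂₂^{-1} B₁₂ᵀ (as scalars), and assume g_A + g_B + a ≠ 0. Then the (1,1) entry of C^{-1} equals (g_A + g_B + a)^{-1}; equivalently, 1/(C^{-1})_{11} = 1/(A^{-1})_{11} + 1/(B^{-1})_{11} + a whenever A, B, C are invertible and the relevant (1,1) entries are nonzero. -/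

import Mathlib

open Matrix

/-- key: inverse (1,1)-entry of bordered matrix -/
lemma key {n : Type*} [Fintype n] [DecidableEq n] (x : ℂ)
    (R : Matrix (Fin 1) n ℂ) (D : Matrix n n ℂ) (hD : IsUnit D)
    (hs : x - (R * D⁻¹ * R.transpose) 0 0 ≠ 0) :
    ((Matrix.fromBlocks (Matrix.of fun _ _ => x) R R.transpose D)⁻¹) (Sum.inl 0) (Sum.inl 0)
      = (x - (R * D⁻¹ * R.transpose) 0 0)⁻¹ := by
  cases hD.nonempty_invertible
  set S : Matrix (Fin 1) (Fin 1) ℂ :=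
    (Matrix.of fun _ _ => x) - R * ⅟D * R.transpose with hS
  have hSentry : S 0 0 = x - (R * D⁻¹ * R.transpose) 0 0 := by
    simp [hS, invOf_eq_nonsing_inv]
  have hSunit : IsUnit S := by
    rw [Matrix.isUnit_iff_isUnit_det, Matrix.det_fin_one, hSentry]
    exact hs.isUnit
  cases hSunit.nonempty_invertible
  letI := Matrix.fromBlocks₂₂Invertible (Matrix.of fun _ _ => x) R R.transpose D
  rw [← invOf_eq_nonsing_inv, Matrix.invOf_fromBlocks₂₂_eq, Matrix.fromBlocks_apply₁₁,
    ← hSentry]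
  show (⅟S) 0 0 = (S 0 0)⁻¹
  rw [invOf_eq_nonsing_inv, Matrix.inv_def, Matrix.det_fin_one, Matrix.adjugate_fin_one]
  simp [Ring.inverse_eq_inv]

/-- if the bordered matrix and D are invertible, the schur scalar is nonzero -/
lemma key2 {n : Type*} [Fintype n] [DecidableEq n] (x : ℂ)
    (R : Matrix (Fin 1) n ℂ) (D : Matrix n n ℂ) (hD : IsUnit D)
    (hM : IsUnit (Matrix.fromBlocks (Matrix.of fun _ _ => x) R R.transpose D)) :
    x - (R * D⁻¹ * R.transpose) 0 0 ≠ 0 := by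
  cases hD.nonempty_invertible
  cases hM.nonempty_invertible
  letI := Matrix.invertibleOfFromBlocks₂₂Invertible (Matrix.of fun _ _ => x) R R.transpose D
  have : IsUnit ((Matrix.of fun _ _ => x) - R * ⅟D * R.transpose) := isUnit_of_invertible _
  rw [Matrix.isUnit_iff_isUnit_det, Matrix.det_fin_one] at this
  simpa [invOf_eq_nonsing_inv] using this.ne_zero



/-- Star product identity: joining two rooted (Hermitian) colored adjacency matrices
`A = [[-a, A₁₂],[A₁₂ᵀ, A₂₂]]` and `B = [[-a, B₁₂],[B₁₂ᵀ, B₂₂]]` at their roots gives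
`C` with `(C⁻¹)₁₁ = (g_A + g_B + a)⁻¹`, i.e. `g_{G⋆H} = g_G + g_H - g_0`. -/
theorem stmt_6 (m k : ℕ) (a : ℂ)
    (A12 : Matrix (Fin 1) (Fin m) ℂ) (A22 : Matrix (Fin m) (Fin m) ℂ) (hA22 : IsUnit A22)
    (B12 : Matrix (Fin 1) (Fin k) ℂ) (B22 : Matrix (Fin k) (Fin k) ℂ) (hB22 : IsUnit B22)
    (A : Matrix (Fin 1 ⊕ Fin m) (Fin 1 ⊕ Fin m) ℂ)
    (hAdef : A = Matrix.fromBlocks (Matrix.of fun _ _ => -a) A12 A12.transpose A22)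
    (hAherm : A.IsHermitian)
    (B : Matrix (Fin 1 ⊕ Fin k) (Fin 1 ⊕ Fin k) ℂ)
    (hBdef : B = Matrix.fromBlocks (Matrix.of fun _ _ => -a) B12 B12.transpose B22)
    (hBherm : B.IsHermitian)
    (C : Matrix (Fin 1 ⊕ (Fin m ⊕ Fin k)) (Fin 1 ⊕ (Fin m ⊕ Fin k)) ℂ)
    (hCdef : C = Matrix.fromBlocks (Matrix.of fun _ _ => -a)
      (Matrix.fromCols A12 B12) (Matrix.fromRows A12.transpose B12.transpose)
      (Matrix.fromBlocks A22 0 0 B22))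
    (gA gB : ℂ)
    (hgA : gA = -a - (A12 * A22⁻¹ * A12.transpose) 0 0)
    (hgB : gB = -a - (B12 * B22⁻¹ * B12.transpose) 0 0)
    (hne : gA + gB + a ≠ 0) :
    (C⁻¹) (Sum.inl 0) (Sum.inl 0) = (gA + gB + a)⁻¹ ∧
      (IsUnit A → IsUnit B → IsUnit C →
        (A⁻¹) (Sum.inl 0) (Sum.inl 0) ≠ 0 → (B⁻¹) (Sum.inl 0) (Sum.inl 0) ≠ 0 →
        (C⁻¹) (Sum.inl 0) (Sum.inl 0) ≠ 0 →
        ((C⁻¹) (Sum.inl 0) (Sum.inl 0))⁻¹ =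
          ((A⁻¹) (Sum.inl 0) (Sum.inl 0))⁻¹ + ((B⁻¹) (Sum.inl 0) (Sum.inl 0))⁻¹ + a) := by
  
  set R := Matrix.fromCols A12 B12 with hR
  set D := Matrix.fromBlocks A22 0 0 B22 with hD
  have hRT : R.transpose = Matrix.fromRows A12.transpose B12.transpose :=
    Matrix.transpose_fromCols A12 B12
  have hC : C = Matrix.fromBlocks (Matrix.of fun _ _ => -a) R R.transpose D := by
    rw [hCdef, hRT]
  have hDunit : IsUnit D := Matrix.isUnit_fromBlocks_zero₂₁.mpr ⟨hA22, hB22⟩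
  have hDinv : D⁻¹ = Matrix.fromBlocks A22⁻¹ 0 0 B22⁻¹ := by
    rw [hD, Matrix.inv_fromBlocks_zero₂₁_of_isUnit_iff _ _ _ (iff_of_true hA22 hB22)]
    simp
  have hscal : (R * D⁻¹ * R.transpose) 0 0
      = (A12 * A22⁻¹ * A12.transpose) 0 0 + (B12 * B22⁻¹ * B12.transpose) 0 0 := by
    rw [hDinv, hR, hRT, Matrix.fromCols_mul_fromBlocks, Matrix.fromCols_mul_fromRows]
    simp [Matrix.add_apply]
  have hsum : -a - (R * D⁻¹ * R.transpose) 0 0 = gA + gB + a := by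
    rw [hscal, hgA, hgB]; ring
  have hs : -a - (R * D⁻¹ * R.transpose) 0 0 ≠ 0 := by rw [hsum]; exact hne
  have part1 : (C⁻¹) (Sum.inl 0) (Sum.inl 0) = (gA + gB + a)⁻¹ := by
    rw [hC, key (-a) R D hDunit hs, hsum]
  refine ⟨part1, fun hAu hBu _ hAne hBne _ => ?_⟩
  have hgAne : gA ≠ 0 := by
    rw [hgA]; exact key2 (-a) A12 A22 hA22 (hAdef ▸ hAu)
  have hgBne : gB ≠ 0 := by
    rw [hgB]; exact key2 (-a) B12 B22 hB22 (hBdef ▸ hBu)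
  have hAinv : (A⁻¹) (Sum.inl 0) (Sum.inl 0) = gA⁻¹ := by
    rw [hAdef, key (-a) A12 A22 hA22 (by rw [← hgA]; exact hgAne), hgA]
  have hBinv : (B⁻¹) (Sum.inl 0) (Sum.inl 0) = gB⁻¹ := by
    rw [hBdef, key (-a) B12 B22 hB22 (by rw [← hgB]; exact hgBne), hgB]
  rw [part1, hAinv, hBinv, inv_inv, inv_inv, inv_inv]
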